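/- Let k be a field and let L_1,...,L_u be linearly independent linear forms in k[y_1,...,y_q], each of which is a binomial (a k-linear combination of exactly two distinct variables with both coefficients nonzero), and suppose together they involve exactly q variables. Then {L_1,...,L_u} can be partitioned into disjoint subsets A, D_1, ..., D_p with p = q - u, such that for each j = 1,...,p the number of variables involved in D_j equals |D_j| + 1, and the number of variables involved in A equals |A|. -/

import Mathlib

private def bchain {α : Type*} (A : α → α → Prop) (r : α) : ℕ → α → Prop
  | 0 => fun v => v = r
  | n + 1 => fun v => ∃ w, bchain A r n w ∧ A w v

private theorem bchain_of_rtg {α : Type*} {A : α → α → Prop} {r v : α}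
    (h : Relation.ReflTransGen A r v) : ∃ n, bchain A r n v := by
  induction h with
  | refl => exact ⟨0, rfl⟩
  | tail _ hadj ih => obtain ⟨n, hn⟩ := ih; exact ⟨n + 1, _, hn, hadj⟩

/-- Lemma 3.8 (blocksofbinomials): linearly independent binomial linear forms
`L_1,...,L_u` in `k[y_1,...,y_q]` involving all `q` variables can be partitioned into
`A, D_1, ..., D_p` with `p = q - u`, each `D_j` involving `|D_j| + 1` variables and
`A` involving `|A|` variables. -/
theorem stmt_2 {k : Type*} [Field k] (q u : ℕ) (L : Fin u → Fin q → k)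
    (hind : LinearIndependent k L)
    (hbin : ∀ i : Fin u, ∃ a b : Fin q, a ≠ b ∧ L i a ≠ 0 ∧ L i b ≠ 0 ∧
      ∀ c : Fin q, c ≠ a → c ≠ b → L i c = 0)
    (hall : ∀ v : Fin q, ∃ i : Fin u, L i v ≠ 0) :
    ∃ c : Fin u → Fin (q - u + 1),
      (∀ j : Fin (q - u),
        Nat.card {v : Fin q // ∃ i : Fin u, c i = j.succ ∧ L i v ≠ 0}
          = Nat.card {i : Fin u // c i = j.succ} + 1) ∧
      Nat.card {v : Fin q // ∃ i : Fin u, c i = 0 ∧ L i v ≠ 0}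
          = Nat.card {i : Fin u // c i = 0} := by
  classical
  rcases Nat.eq_zero_or_pos u with hu0 | hupos
  · -- if u = 0 then q = 0 by `hall`
    subst hu0
    have hq0 : q = 0 := by
      by_contra h
      obtain ⟨i, _⟩ := hall ⟨0, Nat.pos_of_ne_zero h⟩
      exact i.elim0
    subst hq0
    refine ⟨fun i => i.elim0, fun j => ?_, ?_⟩
    · exact absurd j.2 (by omega)
    · simp [Nat.card_eq_fintype_card]
  obtain ⟨i₀⟩ : Nonempty (Fin u) := ⟨⟨0, hupos⟩⟩
  choose a b hab hLa hLb hzero using hbin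
  set Adj : Fin q → Fin q → Prop := fun v w => v ≠ w ∧ ∃ i, L i v ≠ 0 ∧ L i w ≠ 0 with hAdjdef
  have hAdjSymm : Symmetric Adj := by
    rintro v w ⟨h1, i, h2, h3⟩; exact ⟨h1.symm, i, h3, h2⟩
  letI st : Setoid (Fin q) := ⟨Relation.ReflTransGen Adj,
    ⟨fun _ => .refl, fun h => (haveI : Std.Symm Adj := ⟨fun _ _ h => hAdjSymm h⟩; Std.Symm.symm _ _ h),
      fun h1 h2 => h1.trans h2⟩⟩
  let Qc := Quotient st
  let cm : Fin q → Qc := Quotient.mk st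
  have hmem : ∀ i v, L i v ≠ 0 → v = a i ∨ v = b i := by
    intro i v hv
    by_contra h
    push_neg at h
    exact hv (hzero i v h.1 h.2)
  have hclass : ∀ i v, L i v ≠ 0 → cm v = cm (a i) := by
    intro i v hv
    rcases hmem i v hv with rfl | rfl
    · rfl
    · exact Quotient.sound
        (Relation.ReflTransGen.single ⟨(hab i).symm, i, hLb i, hLa i⟩)
  let ec : Fin u → Qc := fun i => cm (a i)
  -- if two distinct vertices are involved in edge i, any vertex involved in i is one of them
  have htwo : ∀ (i : Fin u) (v w z : Fin q), L i v ≠ 0 → L i w ≠ 0 → v ≠ w →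
      L i z ≠ 0 → z = v ∨ z = w := by
    intro i v w z hv hw hvw hz
    rcases hmem i v hv with rfl | rfl <;> rcases hmem i w hw with rfl | rfl <;>
      rcases hmem i z hz with rfl | rfl <;> tauto
  let Vs : Qc → Finset (Fin q) := fun x => Finset.univ.filter fun v => cm v = x
  let Es : Qc → Finset (Fin u) := fun x => Finset.univ.filter fun i => ec i = x
  -- Lemma A : edges ≤ vertices, by linear independence
  have hA : ∀ x : Qc, (Es x).card ≤ (Vs x).card := by
    intro x
    have li1 : LinearIndependent k (L ∘ (Subtype.val : {i // ec i = x} → Fin u)) :=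
      hind.comp _ Subtype.val_injective
    let π : (Fin q → k) →ₗ[k] ({w : Fin q // cm w = x} → k) :=
      LinearMap.funLeft k k Subtype.val
    have hdisj : Disjoint
        (Submodule.span k (Set.range (L ∘ (Subtype.val : {i // ec i = x} → Fin u))))
        (LinearMap.ker π) := by
      have hsupp : ∀ f, f ∈ Submodule.span k
          (Set.range (L ∘ (Subtype.val : {i // ec i = x} → Fin u))) →
          ∀ w : Fin q, cm w ≠ x → f w = 0 := by
        intro f hf
        induction hf using Submodule.span_induction with
        | mem g hg =>
          obtain ⟨⟨i, hi⟩, rfl⟩ := hg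
          intro w hw
          by_contra hLw
          exact hw ((hclass i w hLw).trans hi)
        | zero => intro w _; rfl
        | add g₁ g₂ _ _ ih₁ ih₂ => intro w hw; simp [ih₁ w hw, ih₂ w hw]
        | smul c g _ ih => intro w hw; simp [ih w hw]
      rw [Submodule.disjoint_def]
      intro f hf hker
      funext w
      by_cases hw : cm w = x
      · exact congrFun (LinearMap.mem_ker.mp hker) ⟨w, hw⟩
      · exact hsupp f hf w hw
    have li2 := li1.map hdisj
    have hcard := li2.fintype_card_le_finrank
    rw [Module.finrank_fintype_fun_eq_card] at hcard
    rwa [Fintype.card_subtype, Fintype.card_subtype] at hcard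
  -- Lemma B : vertices ≤ edges + 1, by connectivity
  have hB : ∀ x : Qc, (Vs x).card ≤ (Es x).card + 1 := by
    intro x
    obtain ⟨r, hr⟩ := Quotient.exists_rep x
    have hrV : r ∈ Vs x := by simp [Vs, cm, hr]
    let d : Fin q → ℕ := fun v => if h : ∃ n, bchain Adj r n v then Nat.find h else 0
    have key : ∀ v ∈ (Vs x).erase r,
        ∃ i, ec i = x ∧ L i v ≠ 0 ∧ ∃ w, w ≠ v ∧ L i w ≠ 0 ∧ d w < d v := by
      intro v hv
      obtain ⟨hvr, hvV⟩ := Finset.mem_erase.mp hv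
      have hvx : cm v = x := by simpa [Vs] using hvV
      have hreach : Relation.ReflTransGen Adj r v :=
        Quotient.exact (α := Fin q) (s := st) (hr.trans hvx.symm)
      have hEx : ∃ n, bchain Adj r n v := bchain_of_rtg hreach
      have hdv : d v = Nat.find hEx := dif_pos hEx
      have hfind := Nat.find_spec hEx
      rcases hn : Nat.find hEx with _ | m
      · rw [hn] at hfind
        exact absurd hfind hvr
      · rw [hn] at hfind
        obtain ⟨w, hw, hwv, i, hLw, hLv⟩ := hfind
        have hEw : ∃ n, bchain Adj r n w := ⟨m, hw⟩
        refine ⟨i, ?_, hLv, w, hwv, hLw, ?_⟩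
        · exact (hclass i v hLv).symm.trans hvx
        · have hdw : d w ≤ m := by
            rw [show d w = Nat.find hEw from dif_pos hEw]
            exact Nat.find_le hw
          omega
    let f : Fin q → Fin u := fun v =>
      if h : v ∈ (Vs x).erase r then (key v h).choose else i₀
    have hf1 : ∀ v ∈ (Vs x).erase r, f v ∈ Es x := by
      intro v hv
      have hspec := (key v hv).choose_spec
      simp only [f, dif_pos hv]
      simp [Es, hspec.1]
    have hf2 : Set.InjOn f ((Vs x).erase r : Finset (Fin q)) := by
      intro v1 hv1 v2 hv2 hf
      simp only [Finset.coe_erase, Set.mem_diff, Finset.mem_coe] at hv1 hv2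
      have hv1' : v1 ∈ (Vs x).erase r := Finset.mem_erase.mpr ⟨hv1.2, hv1.1⟩
      have hv2' : v2 ∈ (Vs x).erase r := Finset.mem_erase.mpr ⟨hv2.2, hv2.1⟩
      simp only [f, dif_pos hv1', dif_pos hv2'] at hf
      obtain ⟨_, hL1, w1, hw1v, hLw1, hd1⟩ := (key v1 hv1').choose_spec
      obtain ⟨_, hL2, w2, hw2v, hLw2, hd2⟩ := (key v2 hv2').choose_spec
      set i := (key v1 hv1').choose
      rw [← hf] at hL2 hLw2
      by_contra hne
      have hw1 : w1 = v2 := by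
        rcases htwo i v1 v2 w1 hL1 hL2 hne hLw1 with h | h
        · exact absurd h hw1v
        · exact h
      have hw2 : w2 = v1 := by
        rcases htwo i v1 v2 w2 hL1 hL2 hne hLw2 with h | h
        · exact h
        · exact absurd h hw2v
      rw [hw1] at hd1
      rw [hw2] at hd2
      omega
    have hinj : ((Vs x).erase r).card ≤ (Es x).card :=
      Finset.card_le_card_of_injOn f hf1 hf2
    have := Finset.card_erase_add_one hrV
    omega
  -- counting sums
  have hq : q = ∑ x : Qc, (Vs x).card := by
    have h := Finset.card_eq_sum_card_fiberwise
      (f := cm) (s := Finset.univ) (t := Finset.univ) (fun x _ => Finset.mem_univ _)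
    simpa [Vs] using h
  have hu : u = ∑ x : Qc, (Es x).card := by
    have h := Finset.card_eq_sum_card_fiberwise
      (f := ec) (s := Finset.univ) (t := Finset.univ) (fun x _ => Finset.mem_univ _)
    simpa [Es] using h
  let T : Finset Qc := Finset.univ.filter fun x => (Vs x).card = (Es x).card + 1
  have hnotT : ∀ x ∉ T, (Vs x).card = (Es x).card := by
    intro x hx
    have h1 := hA x
    have h2 := hB x
    have h3 : ¬((Vs x).card = (Es x).card + 1) := by simpa [T] using hx
    omega
  have hsplit : q = u + T.card := by
    rw [hq, hu,
      ← Finset.sum_filter_add_sum_filter_not Finset.univ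
        (fun x => (Vs x).card = (Es x).card + 1) (fun x => (Vs x).card),
      ← Finset.sum_filter_add_sum_filter_not Finset.univ
        (fun x => (Vs x).card = (Es x).card + 1) (fun x => (Es x).card)]
    have e1 : ∑ x ∈ T, (Vs x).card = ∑ x ∈ T, ((Es x).card + 1) := by
      apply Finset.sum_congr rfl
      intro x hx
      simpa [T] using (Finset.mem_filter.mp hx).2
    have e2 : ∑ x ∈ Finset.univ.filter (fun x => ¬((Vs x).card = (Es x).card + 1)),
        (Vs x).card = ∑ x ∈ Finset.univ.filter
          (fun x => ¬((Vs x).card = (Es x).card + 1)), (Es x).card := by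
      apply Finset.sum_congr rfl
      intro x hx
      exact hnotT x (by simpa [T] using (Finset.mem_filter.mp hx).2)
    rw [e1, e2, Finset.sum_add_distrib]
    simp [T]
    omega
  have hTcard : T.card = q - u := by omega
  let e : {x // x ∈ T} ≃ Fin (q - u) :=
    Fintype.equivFinOfCardEq (by rw [Fintype.card_coe, hTcard])
  let c : Fin u → Fin (q - u + 1) := fun i =>
    if h : ec i ∈ T then (e ⟨ec i, h⟩).succ else 0
  refine ⟨c, ?_, ?_⟩
  · intro j
    set x0 : Qc := (e.symm j).val with hx0
    have hx0T : x0 ∈ T := (e.symm j).2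
    have hc : ∀ i, c i = j.succ ↔ ec i = x0 := by
      intro i
      constructor
      · intro h
        by_cases hm : ec i ∈ T
        · simp only [c, dif_pos hm] at h
          have h2 : e ⟨ec i, hm⟩ = j := Fin.succ_injective _ h
          have h3 : (⟨ec i, hm⟩ : {x // x ∈ T}) = e.symm j := by
            rw [← h2, Equiv.symm_apply_apply]
          exact congrArg Subtype.val h3
        · simp only [c, dif_neg hm] at h
          exact absurd h.symm (Fin.succ_ne_zero j)
      · intro h
        have hm : ec i ∈ T := h ▸ hx0T
        simp only [c, dif_pos hm]
        congr 1
        have : (⟨ec i, hm⟩ : {x // x ∈ T}) = e.symm j := Subtype.ext h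
        rw [this, Equiv.apply_symm_apply]
    have hvset : ∀ v : Fin q, (∃ i, c i = j.succ ∧ L i v ≠ 0) ↔ cm v = x0 := by
      intro v
      constructor
      · rintro ⟨i, hci, hLv⟩
        exact (hclass i v hLv).trans ((hc i).1 hci)
      · intro hv
        obtain ⟨i, hi⟩ := hall v
        exact ⟨i, (hc i).2 ((hclass i v hi).symm.trans hv), hi⟩
    rw [Nat.card_eq_fintype_card, Nat.card_eq_fintype_card,
      Fintype.card_subtype, Fintype.card_subtype]
    have hv1 : Finset.univ.filter (fun v => ∃ i, c i = j.succ ∧ L i v ≠ 0) = Vs x0 := by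
      ext v; simp only [Vs, Finset.mem_filter, Finset.mem_univ, true_and]
      exact hvset v
    have he1 : Finset.univ.filter (fun i => c i = j.succ) = Es x0 := by
      ext i; simp only [Es, Finset.mem_filter, Finset.mem_univ, true_and]
      exact hc i
    rw [hv1, he1]
    simpa [T] using (Finset.mem_filter.mp hx0T).2
  · have hc0 : ∀ i, c i = 0 ↔ ec i ∉ T := by
      intro i
      by_cases hm : ec i ∈ T
      · simp only [c, dif_pos hm]
        exact ⟨fun h => absurd h (Fin.succ_ne_zero _), fun h => absurd hm h⟩
      · simp [c, dif_neg hm, hm]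
    have hvset0 : ∀ v : Fin q, (∃ i, c i = 0 ∧ L i v ≠ 0) ↔ cm v ∉ T := by
      intro v
      constructor
      · rintro ⟨i, hci, hLv⟩
        rw [hclass i v hLv]
        exact (hc0 i).1 hci
      · intro hv
        obtain ⟨i, hi⟩ := hall v
        refine ⟨i, (hc0 i).2 ?_, hi⟩
        have h2 : ec i = cm v := (hclass i v hi).symm
        rw [h2]
        exact hv
    rw [Nat.card_eq_fintype_card, Nat.card_eq_fintype_card,
      Fintype.card_subtype, Fintype.card_subtype]
    have hv1 : Finset.univ.filter (fun v => ∃ i, c i = 0 ∧ L i v ≠ 0)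
        = Finset.univ.filter (fun v => cm v ∉ T) := by
      ext v; simp only [Finset.mem_filter, Finset.mem_univ, true_and]
      exact hvset0 v
    rw [hv1]
    have hcv : (Finset.univ.filter (fun v => cm v ∉ T)).card
        = ∑ x ∈ Finset.univ \ T, (Vs x).card := by
      rw [Finset.card_eq_sum_card_fiberwise (f := cm)
        (t := Finset.univ \ T) (fun v hv => by
          simp only [Finset.mem_coe, Finset.mem_sdiff, Finset.mem_univ, true_and]
          simpa using (Finset.mem_filter.mp hv).2)]
      apply Finset.sum_congr rfl
      intro x hx
      have hxT : x ∉ T := (Finset.mem_sdiff.mp hx).2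
      congr 1
      ext v
      simp only [Vs, Finset.mem_filter, Finset.mem_univ, true_and]
      constructor
      · rintro ⟨_, h⟩; exact h
      · rintro h; exact ⟨h ▸ hxT, h⟩
    have hce : (Finset.univ.filter (fun i => c i = 0)).card
        = ∑ x ∈ Finset.univ \ T, (Es x).card := by
      have : Finset.univ.filter (fun i => c i = 0)
          = Finset.univ.filter (fun i => ec i ∉ T) := by
        ext i; simp only [Finset.mem_filter, Finset.mem_univ, true_and]
        exact hc0 i
      rw [this]
      rw [Finset.card_eq_sum_card_fiberwise (f := ec)
        (t := Finset.univ \ T) (fun i hi => by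
          simp only [Finset.mem_coe, Finset.mem_sdiff, Finset.mem_univ, true_and]
          simpa using (Finset.mem_filter.mp hi).2)]
      apply Finset.sum_congr rfl
      intro x hx
      have hxT : x ∉ T := (Finset.mem_sdiff.mp hx).2
      congr 1
      ext i
      simp only [Es, Finset.mem_filter, Finset.mem_univ, true_and]
      constructor
      · rintro ⟨_, h⟩; exact h
      · rintro h; exact ⟨h ▸ hxT, h⟩
    rw [hcv, hce]
    apply Finset.sum_congr rfl
    intro x hx
    exact hnotT x (Finset.mem_sdiff.mp hx).2
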